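/- Let E be a measurable space, let X₁, …, X_q be independent identically distributed E-valued random variables on a probability space, and let H be a nonempty finite set of measurable functions from E to [0,1]. Then: E[ max_{f ∈ H} | (1/q) · ∑_{j=1}^q f(X_j) − E[f(X₁)] | ] ≤ ∫₀¹ 2 · |H| · exp(−2·q·x²) dx. In particular, the left-hand side tends to 0 as q → ∞. -/

import Mathlib

open MeasureTheory


lemma meas_sup' {Ω ι : Type*} [MeasurableSpace Ω] (s : Finset ι) (hs : s.Nonempty)
    (g : ι → Ω → ℝ) (hg : ∀ i ∈ s, Measurable (g i)) :
    Measurable (fun ω => s.sup' hs fun i => g i ω) := by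
  induction hs using Finset.Nonempty.cons_induction with
  | singleton i => simpa using hg i (by simp)
  | cons i s hi hs ih =>
      rw [show (fun ω => (Finset.cons i s hi).sup' (Finset.cons_nonempty hi) fun j => g j ω) = fun ω => (g i ω) ⊔ (s.sup' hs fun j => g j ω) from funext fun ω => Finset.sup'_cons hs (fun j => g j ω)]
      exact (hg i (by simp)).sup (ih fun j hj => hg j (by simp [hj]))

lemma int_of_bdd {Ω : Type*} [MeasurableSpace Ω] (μ : Measure Ω) [IsProbabilityMeasure μ]
    {g : Ω → ℝ} {C : ℝ} (hm : AEStronglyMeasurable g μ) (hb : ∀ ω, |g ω| ≤ C) :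
    Integrable g μ :=
  (integrable_const C).mono' hm (Filter.Eventually.of_forall fun ω => by
    simp only [Real.norm_eq_abs]
    exact hb ω)

lemma aux_var {E : Type*} [MeasurableSpace E] (ν : Measure E) [IsProbabilityMeasure ν]
    (q : ℕ) (h : E → ℝ) (hmeas : Measurable h) (hbd : ∀ x, |h x| ≤ 1)
    (hmean : ∫ x, h x ∂ν = 0) :
    ∫ y, (∑ j : Fin q, h (y j)) ^ 2 ∂(Measure.pi fun _ : Fin q => ν) ≤ q := by
  letI : MeasureSpace E := ⟨ν⟩
  have hπ : (Measure.pi fun _ : Fin q => ν) = (volume : Measure (Fin q → E)) := rfl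
  have hint : ∀ (j k : Fin q), Integrable (fun y : Fin q → E => h (y j) * h (y k))
      (Measure.pi fun _ : Fin q => ν) := by
    intro j k
    refine (integrable_const (1 : ℝ)).mono' ?_ ?_
    · exact ((hmeas.comp (measurable_pi_apply j)).mul
        (hmeas.comp (measurable_pi_apply k))).aestronglyMeasurable
    · refine Filter.Eventually.of_forall fun y => ?_
      have := mul_le_mul (hbd (y j)) (hbd (y k)) (abs_nonneg _) zero_le_one
      simpa [Real.norm_eq_abs, abs_mul] using this
  have expand : ∀ y : Fin q → E, (∑ j : Fin q, h (y j)) ^ 2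
      = ∑ j : Fin q, ∑ k : Fin q, h (y j) * h (y k) := by
    intro y; rw [sq, Finset.sum_mul_sum]
  have key : ∀ j k : Fin q, (∫ y, h (y j) * h (y k) ∂(Measure.pi fun _ : Fin q => ν))
      = (if j = k then ∫ x, h x * h x ∂ν else 0) := by
    intro j k
    have hrw : (fun y : Fin q → E => h (y j) * h (y k))
        = fun y => ∏ i : Fin q, ((if i = j then h (y i) else 1) * (if i = k then h (y i) else 1)) := by
      funext y
      rw [Finset.prod_mul_distrib, Finset.prod_ite_eq' Finset.univ j (fun i => h (y i)),
        Finset.prod_ite_eq' Finset.univ k (fun i => h (y i))]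
      simp
    rw [hrw, MeasureTheory.integral_fintype_prod_eq_prod (ι := Fin q)
      (fun i x => (if i = j then h x else 1) * (if i = k then h x else 1))]
    by_cases hjk : j = k
    · subst hjk
      rw [if_pos rfl, Finset.prod_eq_single_of_mem j (Finset.mem_univ j)]
      · simp only [if_pos rfl]; rfl
      · intro i _ hij
        simp [hij]
    · rw [if_neg hjk]
      refine Finset.prod_eq_zero (Finset.mem_univ j) ?_
      simp only [if_pos rfl, if_neg hjk, mul_one]
      exact hmean
  have hsq : ∫ x, h x * h x ∂ν ≤ 1 := by
    have h1 : Integrable (fun x => h x * h x) ν := by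
      refine int_of_bdd ν (hmeas.mul hmeas).aestronglyMeasurable (C := 1) fun x => ?_
      rw [abs_mul]
      nlinarith [hbd x, abs_nonneg (h x)]
    calc ∫ x, h x * h x ∂ν ≤ ∫ _x, (1:ℝ) ∂ν := by
          refine integral_mono h1 (integrable_const 1) fun x => ?_
          nlinarith [hbd x, abs_nonneg (h x), abs_mul_abs_self (h x)]
      _ = 1 := by simp
  calc ∫ y, (∑ j : Fin q, h (y j)) ^ 2 ∂(Measure.pi fun _ : Fin q => ν)
      = ∫ y, ∑ j : Fin q, ∑ k : Fin q, h (y j) * h (y k) ∂(Measure.pi fun _ : Fin q => ν) := by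
        simp_rw [expand]
    _ = ∑ j : Fin q, ∑ k : Fin q, ∫ y, h (y j) * h (y k) ∂(Measure.pi fun _ : Fin q => ν) := by
        rw [integral_finset_sum _ fun j _ => integrable_finset_sum _ fun k _ => hint j k]
        exact Finset.sum_congr rfl fun j _ => integral_finset_sum _ fun k _ => hint j k
    _ = ∑ j : Fin q, ∫ x, h x * h x ∂ν := by
        refine Finset.sum_congr rfl fun j _ => ?_
        simp_rw [key]
        simp
    _ ≤ ∑ _j : Fin q, (1:ℝ) := Finset.sum_le_sum fun j _ => hsq
    _ = q := by simp


open intervalIntegral in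
lemma exp_int_lower (q : ℕ) (hq : 0 < q) :
    (Real.sqrt q)⁻¹ ≤ ∫ x in Set.Icc (0:ℝ) 1, 2 * Real.exp (-2 * q * x ^ 2) := by
  have hq1 : (1:ℝ) ≤ q := by exact_mod_cast hq
  have hsq : 0 < Real.sqrt q := Real.sqrt_pos.mpr (by linarith)
  set c : ℝ := (Real.sqrt q)⁻¹ with hcdef
  have hc : 0 < c := inv_pos.mpr hsq
  have hc1 : c ≤ 1 := by
    rw [hcdef, inv_le_one_iff₀]
    right
    simpa using Real.one_le_sqrt.mpr hq1
  have hc2 : (q:ℝ) * c ^ 2 = 1 := by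
    rw [hcdef, inv_pow, Real.sq_sqrt (by linarith : (0:ℝ) ≤ q)]
    field_simp
  have hcont : Continuous fun x : ℝ => 2 * Real.exp (-2 * q * x ^ 2) := by continuity
  have hint : ∀ a b : ℝ, IntervalIntegrable (fun x => 2 * Real.exp (-2 * q * x ^ 2)) volume a b :=
    fun a b => hcont.intervalIntegrable a b
  have hpoly : ∀ a b : ℝ, IntervalIntegrable
      (fun x : ℝ => 2 * (1 - q * x ^ 2) ^ 2) volume a b :=
    fun a b => (by continuity : Continuous fun x : ℝ => 2 * (1 - q * x ^ 2) ^ 2).intervalIntegrable a b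
  rw [MeasureTheory.integral_Icc_eq_integral_Ioc,
    ← intervalIntegral.integral_of_le (zero_le_one)]
  have split : ∫ x in (0:ℝ)..1, 2 * Real.exp (-2 * q * x ^ 2)
      = (∫ x in (0:ℝ)..c, 2 * Real.exp (-2 * q * x ^ 2))
        + ∫ x in c..1, 2 * Real.exp (-2 * q * x ^ 2) :=
    (intervalIntegral.integral_add_adjacent_intervals (hint 0 c) (hint c 1)).symm
  have h2 : 0 ≤ ∫ x in c..1, 2 * Real.exp (-2 * q * x ^ 2) :=
    intervalIntegral.integral_nonneg hc1 fun x _ => by positivity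
  have hpt : ∀ x ∈ Set.Icc (0:ℝ) c,
      2 * (1 - q * x ^ 2) ^ 2 ≤ 2 * Real.exp (-2 * q * x ^ 2) := by
    intro x hx
    have hx0 : 0 ≤ x := hx.1
    have hxq : (q:ℝ) * x ^ 2 ≤ 1 := by
      calc (q:ℝ) * x ^ 2 ≤ (q:ℝ) * c ^ 2 := by
            have : x ^ 2 ≤ c ^ 2 := pow_le_pow_left₀ hx0 hx.2 2
            nlinarith
        _ = 1 := hc2
    have h1 : (0:ℝ) ≤ 1 - q * x ^ 2 := by linarith
    have h3 : 1 - (q:ℝ) * x ^ 2 ≤ Real.exp (-(q * x ^ 2)) := by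
      have := Real.add_one_le_exp (-((q:ℝ) * x ^ 2))
      linarith
    have h4 : (1 - (q:ℝ) * x ^ 2) ^ 2 ≤ Real.exp (-(q * x ^ 2)) ^ 2 :=
      pow_le_pow_left₀ h1 h3 2
    have h5 : Real.exp (-((q:ℝ) * x ^ 2)) ^ 2 = Real.exp (-2 * q * x ^ 2) := by
      rw [sq, ← Real.exp_add]; ring_nf
    linarith [h4, h5 ▸ h4]
  have h1 : ∫ x in (0:ℝ)..c, 2 * (1 - q * x ^ 2) ^ 2
      ≤ ∫ x in (0:ℝ)..c, 2 * Real.exp (-2 * q * x ^ 2) :=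
    intervalIntegral.integral_mono_on hc.le (hpoly 0 c) (hint 0 c) hpt
  have hval : ∫ x in (0:ℝ)..c, 2 * (1 - q * x ^ 2) ^ 2 = 16 / 15 * c := by
    have hfe : (fun x : ℝ => 2 * (1 - q * x ^ 2) ^ 2)
        = fun x : ℝ => 2 - (4 * q) * x ^ 2 + (2 * q ^ 2) * x ^ 4 := by
      funext x; ring
    rw [hfe]
    rw [intervalIntegral.integral_add (f := fun x : ℝ => 2 - (4 * q) * x ^ 2) (g := fun x : ℝ => (2 * q ^ 2) * x ^ 4) (((continuous_const.sub
        (continuous_const.mul (continuous_pow 2)))).intervalIntegrable 0 c)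
        ((continuous_const.mul (continuous_pow 4)).intervalIntegrable 0 c),
      intervalIntegral.integral_sub (f := fun _ : ℝ => (2:ℝ)) (g := fun x : ℝ => (4 * q) * x ^ 2) (intervalIntegrable_const)
        ((continuous_const.mul (continuous_pow 2)).intervalIntegrable 0 c),
      intervalIntegral.integral_const_mul, intervalIntegral.integral_const_mul,
      integral_pow (n := 2), integral_pow (n := 4),
      intervalIntegral.integral_const]
    simp only [sub_zero, smul_eq_mul]
    norm_num
    linear_combination (c * ((2/5) * (q:ℝ) * c ^ 2 - 14/15)) * hc2
  have : c ≤ 16 / 15 * c := by nlinarith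
  linarith [split, h1, h2, hval, this]


lemma tendsto_rhs (C : ℝ) :
    Filter.Tendsto
      (fun q' : ℕ => ∫ x in Set.Icc (0 : ℝ) 1, 2 * C * Real.exp (-2 * q' * x ^ 2))
      Filter.atTop (nhds 0) := by
  have key : Filter.Tendsto
      (fun q' : ℕ => ∫ x in Set.Icc (0 : ℝ) 1, 2 * C * Real.exp (-2 * q' * x ^ 2))
      Filter.atTop (nhds (∫ x in Set.Icc (0 : ℝ) 1, (0:ℝ))) := by
    refine MeasureTheory.tendsto_integral_of_dominated_convergence
      (fun _ => 2 * |C|) (fun n => ?_) ?_ (fun n => ?_) ?_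
    · exact ((continuous_const.mul
        (Real.continuous_exp.comp (by continuity))).aestronglyMeasurable).restrict
    · exact integrable_const _
    · refine Filter.Eventually.of_forall fun x => ?_
      have h1 : Real.exp (-2 * n * x ^ 2) ≤ 1 := by
        rw [Real.exp_le_one_iff]
        nlinarith [sq_nonneg x, Nat.cast_nonneg (α := ℝ) n]
      have h2 : 0 < Real.exp (-2 * n * x ^ 2) := Real.exp_pos _
      rw [Real.norm_eq_abs, abs_mul, abs_mul]
      calc |2| * |C| * |Real.exp (-2 * n * x ^ 2)| ≤ |2| * |C| * 1 := by
            rw [abs_of_pos h2]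
            exact mul_le_mul_of_nonneg_left h1 (by positivity)
        _ = 2 * |C| := by norm_num
    · have h0 : ∀ᵐ x : ℝ ∂(volume.restrict (Set.Icc 0 1)), x ≠ (0:ℝ) := by
        refine ae_restrict_of_ae ?_
        rw [ae_iff]
        simp only [not_not]
        simpa [Set.setOf_eq_eq_singleton] using Real.volume_singleton (a := 0)
      filter_upwards [h0] with x hx
      have hx2 : (0:ℝ) < x ^ 2 := by
        have := abs_pos.mpr hx
        nlinarith [sq_abs x]
      have h3 : Filter.Tendsto (fun n : ℕ => (-2 * x ^ 2) * n) Filter.atTop Filter.atBot :=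
        (tendsto_natCast_atTop_atTop).const_mul_atTop_of_neg (by nlinarith)
      have h4 : Filter.Tendsto (fun n : ℕ => Real.exp (-2 * n * x ^ 2))
          Filter.atTop (nhds 0) := by
        have := Real.tendsto_exp_atBot.comp h3
        refine this.congr fun n => ?_
        simp only [Function.comp_apply]
        ring_nf
      have := h4.const_mul (2 * C)
      simpa using this
  simpa using key

lemma per_f {Ω E : Type*} [MeasurableSpace Ω] [MeasurableSpace E]
    (μ : Measure Ω) [IsProbabilityMeasure μ]
    (q : ℕ) (hq : 0 < q) (X : Fin q → Ω → E) (hXmeas : ∀ j, Measurable (X j))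
    (hiid : Measure.map (fun ω (j : Fin q) => X j ω) μ =
      Measure.pi fun _ : Fin q => Measure.map (X ⟨0, hq⟩) μ)
    (f : E → ℝ) (hf : Measurable f) (hf01 : ∀ x, f x ∈ Set.Icc (0 : ℝ) 1) :
    ∫ ω, |(1 / (q : ℝ)) * ∑ j, f (X j ω) - ∫ ω', f (X ⟨0, hq⟩ ω') ∂μ| ∂μ
      ≤ (Real.sqrt q)⁻¹ := by
  have hq0 : (0:ℝ) < q := by exact_mod_cast hq
  have hs : 0 < Real.sqrt q := Real.sqrt_pos.mpr hq0
  have hs2 : Real.sqrt q * Real.sqrt q = q := Real.mul_self_sqrt hq0.le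
  set ν : Measure E := Measure.map (X ⟨0, hq⟩) μ with hν
  haveI : IsProbabilityMeasure ν := Measure.isProbabilityMeasure_map (hXmeas _).aemeasurable
  haveI : IsProbabilityMeasure (Measure.pi fun _ : Fin q => ν) := by infer_instance
  have hfint : Integrable f ν := int_of_bdd ν hf.aestronglyMeasurable
    (fun x => abs_le.mpr ⟨by linarith [(hf01 x).1], (hf01 x).2⟩)
  set m : ℝ := ∫ x, f x ∂ν with hm
  have hmean_eq : ∫ ω', f (X ⟨0, hq⟩ ω') ∂μ = m := by
    rw [hm, hν, integral_map (hXmeas _).aemeasurable hf.aestronglyMeasurable]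
  have hm0 : 0 ≤ m := integral_nonneg fun x => (hf01 x).1
  have hm1 : m ≤ 1 := by
    calc m ≤ ∫ _x, (1:ℝ) ∂ν := integral_mono hfint (integrable_const 1) fun x => (hf01 x).2
      _ = 1 := by simp
  set h : E → ℝ := fun x => f x - m with hh
  have hhmeas : Measurable h := hf.sub measurable_const
  have hhbd : ∀ x, |h x| ≤ 1 := fun x =>
    abs_le.mpr ⟨by simp only [hh]; linarith [(hf01 x).1], by simp only [hh]; linarith [(hf01 x).2]⟩
  have hhmean : ∫ x, h x ∂ν = 0 := by
    simp only [hh]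
    rw [integral_sub hfint (integrable_const m)]
    simp [hm]
  -- rewrite the integrand
  have hrw : ∀ ω, |(1 / (q : ℝ)) * ∑ j, f (X j ω) - ∫ ω', f (X ⟨0, hq⟩ ω') ∂μ|
      = |(1 / (q : ℝ)) * ∑ j : Fin q, h (X j ω)| := by
    intro ω
    congr 1
    simp only [hh]
    rw [Finset.sum_sub_distrib, Finset.sum_const, Finset.card_univ, Fintype.card_fin,
      hmean_eq]
    field_simp
    rw [nsmul_eq_mul]
  have hT : Measurable (fun ω (j : Fin q) => X j ω) := measurable_pi_lambda _ hXmeas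
  set G : (Fin q → E) → ℝ := fun y => |(1 / (q : ℝ)) * ∑ j : Fin q, h (y j)| with hG
  have hGmeas : Measurable G :=
    (measurable_const.mul (Finset.measurable_sum _ fun j _ =>
      hhmeas.comp (measurable_pi_apply j))).abs
  have hmap : ∫ ω, |(1 / (q : ℝ)) * ∑ j, f (X j ω) - ∫ ω', f (X ⟨0, hq⟩ ω') ∂μ| ∂μ
      = ∫ y, G y ∂(Measure.pi fun _ : Fin q => ν) := by
    rw [← hiid, integral_map hT.aemeasurable hGmeas.aestronglyMeasurable]
    exact integral_congr_ae (Filter.Eventually.of_forall fun ω => hrw ω)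
  rw [hmap]
  -- bounds on G
  have hGbd : ∀ y, |G y| ≤ 1 := by
    intro y
    rw [hG]
    simp only [abs_abs, abs_mul]
    calc |1 / (q:ℝ)| * |∑ j : Fin q, h (y j)| ≤ (1/(q:ℝ)) * q := by
          refine mul_le_mul (le_of_eq (abs_of_pos (by positivity))) ?_ (abs_nonneg _) (by positivity)
          calc |∑ j : Fin q, h (y j)| ≤ ∑ j : Fin q, |h (y j)| := Finset.abs_sum_le_sum_abs _ _
            _ ≤ ∑ _j : Fin q, (1:ℝ) := Finset.sum_le_sum fun j _ => hhbd _
            _ = q := by simp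
      _ = 1 := by field_simp
  have hGint : Integrable G (Measure.pi fun _ : Fin q => ν) :=
    int_of_bdd _ hGmeas.aestronglyMeasurable hGbd
  set G2 : (Fin q → E) → ℝ := fun y => ((1 / (q : ℝ)) * ∑ j : Fin q, h (y j)) ^ 2 with hG2
  have hG2meas : Measurable G2 :=
    (measurable_const.mul (Finset.measurable_sum _ fun j _ =>
      hhmeas.comp (measurable_pi_apply j))).pow_const 2
  have hG2bd : ∀ y, |G2 y| ≤ 1 := by
    intro y
    rw [hG2]
    have := hGbd y
    rw [hG] at this
    rw [abs_abs] at this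
    simp only [abs_pow, sq_abs] at *
    nlinarith [abs_nonneg ((1 / (q:ℝ)) * ∑ j : Fin q, h (y j)), sq_abs ((1 / (q:ℝ)) * ∑ j : Fin q, h (y j))]
  have hG2int : Integrable G2 (Measure.pi fun _ : Fin q => ν) :=
    int_of_bdd _ hG2meas.aestronglyMeasurable hG2bd
  -- AM-GM pointwise
  have hAM : ∀ y, G y ≤ (Real.sqrt q * G2 y + (Real.sqrt q)⁻¹) / 2 := by
    intro y
    set z := (1 / (q : ℝ)) * ∑ j : Fin q, h (y j)
    have h1 : Real.sqrt q * (Real.sqrt q)⁻¹ = 1 := mul_inv_cancel₀ hs.ne'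
    have h2 := mul_nonneg hs.le (sq_nonneg (|z| - (Real.sqrt q)⁻¹))
    have h3 : (0:ℝ) ≤ (Real.sqrt q)⁻¹ := by positivity
    have e1 : Real.sqrt q * ((Real.sqrt q)⁻¹ * (Real.sqrt q)⁻¹) = (Real.sqrt q)⁻¹ := by
      rw [← mul_assoc, h1, one_mul]
    have e2 : Real.sqrt q * (Real.sqrt q)⁻¹ * |z| = |z| := by rw [h1, one_mul]
    show |z| ≤ (Real.sqrt q * z ^ 2 + (Real.sqrt q)⁻¹) / 2
    nlinarith [sq_abs z, h2, h1, h3, e1, e2]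
  -- integrate
  have hint2 : ∫ y, G2 y ∂(Measure.pi fun _ : Fin q => ν) ≤ 1 / q := by
    have expand : ∀ y : Fin q → E, G2 y = (1/(q:ℝ))^2 * (∑ j : Fin q, h (y j)) ^ 2 := by
      intro y; simp only [hG2]; rw [mul_pow]
    calc ∫ y, G2 y ∂(Measure.pi fun _ : Fin q => ν)
        = (1/(q:ℝ))^2 * ∫ y, (∑ j : Fin q, h (y j)) ^ 2 ∂(Measure.pi fun _ : Fin q => ν) := by
          simp_rw [expand]
          exact integral_const_mul _ _
      _ ≤ (1/(q:ℝ))^2 * q := by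
          refine mul_le_mul_of_nonneg_left ?_ (by positivity)
          exact aux_var ν q h hhmeas hhbd hhmean
      _ = 1 / q := by field_simp
  calc ∫ y, G y ∂(Measure.pi fun _ : Fin q => ν)
      ≤ ∫ y, (Real.sqrt q * G2 y + (Real.sqrt q)⁻¹) / 2 ∂(Measure.pi fun _ : Fin q => ν) := by
        refine integral_mono hGint ?_ hAM
        exact (((hG2int.const_mul _).add (integrable_const _)).div_const 2)
    _ = (Real.sqrt q * (∫ y, G2 y ∂(Measure.pi fun _ : Fin q => ν)) + (Real.sqrt q)⁻¹) / 2 := by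
        rw [integral_div, integral_add (hG2int.const_mul _) (integrable_const _),
          integral_const_mul, integral_const]
        simp
    _ ≤ (Real.sqrt q * (1 / q) + (Real.sqrt q)⁻¹) / 2 := by
        have := mul_le_mul_of_nonneg_left hint2 hs.le
        linarith
    _ = (Real.sqrt q)⁻¹ := by
        have h5 : Real.sqrt q * (1 / q) = (Real.sqrt q)⁻¹ := by
          field_simp
          exact Real.sq_sqrt hq0.le
        rw [h5]
        ring


/-- Step in the proof of Lemma 2 of the paper: if `X₁, …, X_q` are i.i.d. `E`-valued random
variables and `H` is a nonempty finite set of measurable functions `E → [0,1]`, then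
`E[max_{f ∈ H} |(1/q)·∑_j f(X_j) − E[f(X₁)]|] ≤ ∫₀¹ 2·|H|·exp(−2qx²) dx`; moreover the
right-hand side (and hence the left-hand side) tends to `0` as `q → ∞`. -/
theorem stmt14 {Ω E : Type*} [MeasurableSpace Ω] [MeasurableSpace E]
    (μ : Measure Ω) [IsProbabilityMeasure μ]
    (q : ℕ) (hq : 0 < q) (X : Fin q → Ω → E) (hXmeas : ∀ j, Measurable (X j))
    (hiid : Measure.map (fun ω (j : Fin q) => X j ω) μ =
      Measure.pi fun _ : Fin q => Measure.map (X ⟨0, hq⟩) μ)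
    (H : Finset (E → ℝ)) (hHne : H.Nonempty)
    (hHmeas : ∀ f ∈ H, Measurable f) (hH01 : ∀ f ∈ H, ∀ x, f x ∈ Set.Icc (0 : ℝ) 1) :
    (∫ ω, ⨆ f : H, |(1 / (q : ℝ)) * ∑ j, f.1 (X j ω) - ∫ ω', f.1 (X ⟨0, hq⟩ ω') ∂μ| ∂μ ≤
        ∫ x in Set.Icc (0 : ℝ) 1, 2 * H.card * Real.exp (-2 * q * x ^ 2)) ∧
      Filter.Tendsto
        (fun q' : ℕ => ∫ x in Set.Icc (0 : ℝ) 1, 2 * H.card * Real.exp (-2 * q' * x ^ 2))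
        Filter.atTop (nhds 0) := by
  have hq0 : (0:ℝ) < q := by exact_mod_cast hq
  haveI : Nonempty ↥H := Finset.nonempty_coe_sort.mpr hHne
  refine ⟨?_, tendsto_rhs (H.card : ℝ)⟩
  set g : ↥H → Ω → ℝ := fun f ω =>
    |(1 / (q : ℝ)) * ∑ j, f.1 (X j ω) - ∫ ω', f.1 (X ⟨0, hq⟩ ω') ∂μ| with hg
  have hgmeas : ∀ f : ↥H, Measurable (g f) := fun f =>
    ((measurable_const.mul (Finset.measurable_sum _ fun j _ =>
      (hHmeas f.1 f.2).comp (hXmeas j))).sub measurable_const).abs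
  have hgbd : ∀ f : ↥H, ∀ ω, |g f ω| ≤ 1 := by
    intro f ω
    simp only [hg, abs_abs]
    have hfint : Integrable (fun ω' => f.1 (X ⟨0, hq⟩ ω')) μ :=
      int_of_bdd μ (((hHmeas f.1 f.2).comp (hXmeas _)).aestronglyMeasurable)
        (fun ω' => abs_le.mpr ⟨by linarith [(hH01 f.1 f.2 (X ⟨0, hq⟩ ω')).1],
          (hH01 f.1 f.2 _).2⟩)
    have hmean0 : 0 ≤ ∫ ω', f.1 (X ⟨0, hq⟩ ω') ∂μ :=
      integral_nonneg fun ω' => (hH01 f.1 f.2 _).1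
    have hmean1 : ∫ ω', f.1 (X ⟨0, hq⟩ ω') ∂μ ≤ 1 := by
      calc ∫ ω', f.1 (X ⟨0, hq⟩ ω') ∂μ ≤ ∫ _ω', (1:ℝ) ∂μ :=
            integral_mono hfint (integrable_const 1) fun ω' => (hH01 f.1 f.2 _).2
        _ = 1 := by simp
    have havg0 : 0 ≤ (1/(q:ℝ)) * ∑ j, f.1 (X j ω) :=
      mul_nonneg (by positivity) (Finset.sum_nonneg fun j _ => (hH01 f.1 f.2 _).1)
    have havg1 : (1/(q:ℝ)) * ∑ j, f.1 (X j ω) ≤ 1 := by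
      have hsum : ∑ j : Fin q, f.1 (X j ω) ≤ (q:ℝ) := by
        calc ∑ j : Fin q, f.1 (X j ω) ≤ ∑ _j : Fin q, (1:ℝ) :=
              Finset.sum_le_sum fun j _ => (hH01 f.1 f.2 _).2
          _ = q := by simp
      calc (1/(q:ℝ)) * ∑ j, f.1 (X j ω) ≤ (1/(q:ℝ)) * q :=
            mul_le_mul_of_nonneg_left hsum (by positivity)
        _ = 1 := by field_simp
    exact abs_le.mpr ⟨by linarith, by linarith⟩
  have hgint : ∀ f : ↥H, Integrable (g f) μ := fun f =>
    int_of_bdd μ (hgmeas f).aestronglyMeasurable (hgbd f)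
  have key : ∫ ω, ⨆ f : ↥H, g f ω ∂μ ≤
      ∫ x in Set.Icc (0 : ℝ) 1, 2 * H.card * Real.exp (-2 * q * x ^ 2) := by
    have hYeq : (fun ω => ⨆ f : ↥H, g f ω)
        = fun ω => Finset.univ.sup' Finset.univ_nonempty (fun f : ↥H => g f ω) := by
      funext ω; exact (Finset.sup'_univ_eq_ciSup _).symm
    have hYmeas : Measurable (fun ω => ⨆ f : ↥H, g f ω) := by
      rw [hYeq]; exact meas_sup' _ _ _ fun f _ => hgmeas f
    have hYbd : ∀ ω, |⨆ f : ↥H, g f ω| ≤ 1 := by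
      intro ω
      have hub : (⨆ f : ↥H, g f ω) ≤ 1 :=
        ciSup_le fun f => (le_abs_self _).trans (hgbd f ω)
      have hlb : (0:ℝ) ≤ ⨆ f : ↥H, g f ω := by
        refine le_ciSup_of_le (Set.Finite.bddAbove (Set.finite_range _))
          (Classical.arbitrary ↥H) ?_
        exact abs_nonneg _
      exact abs_le.mpr ⟨by linarith, hub⟩
    have hYint : Integrable (fun ω => ⨆ f : ↥H, g f ω) μ :=
      int_of_bdd μ hYmeas.aestronglyMeasurable hYbd
    have hptsum : ∀ ω, (⨆ f : ↥H, g f ω) ≤ ∑ f : ↥H, g f ω := fun ω =>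
      ciSup_le fun f => Finset.single_le_sum (f := fun f' : ↥H => g f' ω)
        (fun f' _ => abs_nonneg _) (Finset.mem_univ f)
    calc ∫ ω, ⨆ f : ↥H, g f ω ∂μ
        ≤ ∫ ω, ∑ f : ↥H, g f ω ∂μ :=
          integral_mono hYint (integrable_finset_sum _ fun f _ => hgint f) hptsum
      _ = ∑ f : ↥H, ∫ ω, g f ω ∂μ := integral_finset_sum _ fun f _ => hgint f
      _ ≤ ∑ _f : ↥H, (Real.sqrt q)⁻¹ := by
          refine Finset.sum_le_sum fun f _ => ?_
          simpa only [hg] using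
            per_f μ q hq X hXmeas hiid f.1 (hHmeas f.1 f.2) (hH01 f.1 f.2)
      _ = (H.card : ℝ) * (Real.sqrt q)⁻¹ := by
          simp [Finset.sum_const, Fintype.card_coe]
      _ ≤ ∫ x in Set.Icc (0 : ℝ) 1, 2 * H.card * Real.exp (-2 * q * x ^ 2) := by
          calc (H.card : ℝ) * (Real.sqrt q)⁻¹
              ≤ (H.card : ℝ) * ∫ x in Set.Icc (0:ℝ) 1, 2 * Real.exp (-2 * q * x ^ 2) :=
                mul_le_mul_of_nonneg_left (exp_int_lower q hq) (Nat.cast_nonneg _)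
            _ = ∫ x in Set.Icc (0:ℝ) 1, (H.card : ℝ) * (2 * Real.exp (-2 * q * x ^ 2)) :=
                (integral_const_mul _ _).symm
            _ = ∫ x in Set.Icc (0:ℝ) 1, 2 * H.card * Real.exp (-2 * q * x ^ 2) :=
                integral_congr_ae (Filter.Eventually.of_forall fun x => by ring)
  exact key
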